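/- Let p, q be real numbers with 2 < q < p and let A, B, C be positive real numbers with A + B − C < 0. Then there exists t₀ ∈ (0, 1) such that A·t₀² + B·t₀^p − C·t₀^q = 0 and A·t₀² + (p−1)·B·t₀^p − (q−1)·C·t₀^q < 0. -/

import Mathlib

/-- Scalar content of Proposition 1: if `A + B - C < 0` with `A, B, C > 0` and `2 < q < p`,
then there is `t₀ ∈ (0,1)` with `A t₀² + B t₀^p - C t₀^q = 0` and
`A t₀² + (p-1) B t₀^p - (q-1) C t₀^q < 0`. -/
theorem stmt_2 (p q A B C : ℝ) (hq : 2 < q) (hqp : q < p)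
    (hA : 0 < A) (hB : 0 < B) (hC : 0 < C) (h : A + B - C < 0) :
    ∃ t₀ ∈ Set.Ioo (0 : ℝ) 1,
      A * t₀ ^ 2 + B * t₀ ^ p - C * t₀ ^ q = 0 ∧
      A * t₀ ^ 2 + (p - 1) * B * t₀ ^ p - (q - 1) * C * t₀ ^ q < 0 := by
  have hp2 : (0:ℝ) < p - 2 := by linarith
  have hq2 : (0:ℝ) < q - 2 := by linarith
  set f : ℝ → ℝ := fun t => A + B * t ^ (p - 2) - C * t ^ (q - 2) with hf
  have hcont : ContinuousOn f (Set.Icc 0 1) := by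
    intro x _
    have h1 : ContinuousAt (fun t : ℝ => t ^ (p - 2)) x :=
      Real.continuousAt_rpow_const x (p - 2) (Or.inr hp2.le)
    have h2 : ContinuousAt (fun t : ℝ => t ^ (q - 2)) x :=
      Real.continuousAt_rpow_const x (q - 2) (Or.inr hq2.le)
    exact ((continuousAt_const.add (continuousAt_const.mul h1)).sub
      (continuousAt_const.mul h2)).continuousWithinAt
  have hf0 : f 0 = A := by
    simp [hf, Real.zero_rpow hp2.ne', Real.zero_rpow hq2.ne']
  have hf1 : f 1 = A + B - C := by simp [hf]
  have hmem : (0:ℝ) ∈ Set.Ioo (f 1) (f 0) := by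
    rw [hf0, hf1]; exact ⟨h, hA⟩
  obtain ⟨t₀, ht₀, hft⟩ := intermediate_value_Ioo' (by norm_num : (0:ℝ) ≤ 1) hcont hmem
  obtain ⟨ht0, ht1⟩ := ht₀
  refine ⟨t₀, ⟨ht0, ht1⟩, ?_⟩
  set X : ℝ := t₀ ^ (p - 2) with hX
  set Y : ℝ := t₀ ^ (q - 2) with hY
  have hXpos : 0 < X := Real.rpow_pos_of_pos ht0 _
  have hYpos : 0 < Y := Real.rpow_pos_of_pos ht0 _
  have hfzero : A + B * X - C * Y = 0 := hft
  set r : ℝ := (p - 2) / (q - 2) with hr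
  have hr1 : 1 < r := (one_lt_div hq2).2 (by linarith)
  have hx1 : Y < 1 := Real.rpow_lt_one ht0.le ht1 hq2
  have hYr : Y ^ r = X := by
    rw [hY, ← Real.rpow_mul ht0.le, hX]
    congr 1
    rw [hr]
    field_simp
  -- Bernoulli's inequality gives the tangent-line estimate for x ↦ x^r at Y
  have hbern : 1 + r * ((1 - Y) / Y) ≤ (1 + (1 - Y) / Y) ^ r := by
    apply one_add_mul_self_le_rpow_one_add _ hr1.le
    have : 0 ≤ (1 - Y) / Y := div_nonneg (by linarith) hYpos.le
    linarith
  have h1Y : 1 + (1 - Y) / Y = Y⁻¹ := by field_simp; ring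
  have hinv : (Y⁻¹ : ℝ) ^ r = X⁻¹ := by
    rw [Real.inv_rpow hYpos.le, hYr]
  have hineq : 1 + r * ((1 - Y) / Y) ≤ X⁻¹ := by rw [← hinv, ← h1Y]; exact hbern
  have h5 : X * (1 + r * ((1 - Y) / Y)) ≤ 1 := by
    calc X * (1 + r * ((1 - Y) / Y)) ≤ X * X⁻¹ :=
          mul_le_mul_of_nonneg_left hineq hXpos.le
      _ = 1 := mul_inv_cancel₀ hXpos.ne'
  have h6 : X * Y + r * (1 - Y) * X ≤ Y := by
    have h7 : (X * (1 + r * ((1 - Y) / Y))) * Y = X * Y + r * (1 - Y) * X := by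
      field_simp
    have := mul_le_mul_of_nonneg_right h5 hYpos.le
    rw [h7, one_mul] at this
    exact this
  -- secant comparison: key strict inequality r * B * X < C * Y
  have hsec : B * (1 - X) < C * (1 - Y) := by linarith
  have hkey : r * B * X < C * Y := by
    have h8 : Y * (B * (1 - X)) < Y * (C * (1 - Y)) := by
      exact mul_lt_mul_of_pos_left hsec hYpos
    have h9 : B * (X * Y + r * (1 - Y) * X) ≤ B * Y := mul_le_mul_of_nonneg_left h6 hB.le
    have h10 : (r * B * X) * (1 - Y) < (C * Y) * (1 - Y) := by nlinarith
    exact lt_of_mul_lt_mul_right h10 (by linarith)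
  have hqr : (q - 2) * r = p - 2 := by rw [hr]; field_simp
  have hkey2 : (p - 2) * (B * X) < (q - 2) * (C * Y) := by
    have h12 := mul_lt_mul_of_pos_left hkey hq2
    calc (p - 2) * (B * X) = (q - 2) * (r * B * X) := by rw [← hqr]; ring
      _ < (q - 2) * (C * Y) := h12
  -- translate t₀^p, t₀^q
  have ht2 : (t₀ : ℝ) ^ (2:ℕ) = t₀ ^ (2:ℝ) := (Real.rpow_natCast t₀ 2).symm
  have htp : t₀ ^ p = t₀ ^ (2:ℕ) * X := by
    rw [ht2, hX, ← Real.rpow_add ht0]; norm_num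
  have htq : t₀ ^ q = t₀ ^ (2:ℕ) * Y := by
    rw [ht2, hY, ← Real.rpow_add ht0]; norm_num
  have ht2pos : 0 < (t₀ : ℝ) ^ (2:ℕ) := pow_pos ht0 2
  clear_value X Y r
  clear hf hcont hf0 hf1 hmem hft
  clear f
  constructor
  · rw [htp, htq]
    have hrw : A * t₀ ^ 2 + B * (t₀ ^ 2 * X) - C * (t₀ ^ 2 * Y)
        = t₀ ^ 2 * (A + B * X - C * Y) := by ring
    rw [hrw, hfzero, mul_zero]
  · rw [htp, htq]
    have hfin : A + (p - 1) * (B * X) - (q - 1) * (C * Y) < 0 := by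
      have hCY : C * Y = A + B * X := by linarith
      rw [hCY] at hkey2 ⊢
      have h13 : (p - 2) * (B * X) = p * (B * X) - 2 * (B * X) := by ring
      have h14 : (q - 2) * (A + B * X) = q * A - 2 * A + q * (B * X) - 2 * (B * X) := by ring
      have h15 : A + (p - 1) * (B * X) - (q - 1) * (A + B * X)
          = p * (B * X) - (q * A - 2 * A + q * (B * X) - 2 * (B * X)) - 2 * (B * X) := by ring
      rw [h15]
      linarith [hkey2]
    have hrw : A * t₀ ^ 2 + (p - 1) * B * (t₀ ^ 2 * X) - (q - 1) * C * (t₀ ^ 2 * Y)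
        = t₀ ^ 2 * (A + (p - 1) * (B * X) - (q - 1) * (C * Y)) := by ring
    rw [hrw]
    exact mul_neg_of_pos_of_neg ht2pos hfin
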